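/- arXiv:2006.03544 — 6 statements merged into one kernel-verified Lean document; each statement's English description precedes it below -/
import Mathlib

section
/- In a topological exponential vector space X over K, every neighbourhood of θ is an absorbing set. -/
open Pointwise

class ExpVectorSpace (K : Type*) (X : Type*) [RCLike K] extends
    AddCommMonoid X, PartialOrder X, SMul K X where
  add_le_add_right' : ∀ {x y : X}, x ≤ y → ∀ z : X, x + z ≤ y + z
  smul_le_smul' : ∀ {x y : X}, x ≤ y → ∀ α : K, α • x ≤ α • y
  smul_add' : ∀ (α : K) (x y : X), α • (x + y) = α • x + α • y
  mul_smul' : ∀ (α β : K) (x : X), α • (β • x) = (α * β) • x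
  add_smul_le' : ∀ (α β : K) (x : X), (α + β) • x ≤ α • x + β • x
  one_smul' : ∀ x : X, (1 : K) • x = x
  smul_eq_zero_iff' : ∀ (α : K) (x : X), α • x = 0 ↔ α = 0 ∨ x = 0
  add_neg_one_smul_eq_zero_iff' : ∀ x : X, x + (-1 : K) • x = 0 ↔ IsMin x
  exists_isMin_le' : ∀ x : X, ∃ p : X, IsMin p ∧ p ≤ x

def EvsAbsorbing (K : Type*) {X : Type*} [RCLike K] [ExpVectorSpace K X] (A : Set X) : Prop :=
  ∀ x : X, ∃ α : ℝ, 0 < α ∧ ∀ μ : K, ‖μ‖ ≤ α → μ • x ∈ A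

def EvsBalanced (K : Type*) {X : Type*} [RCLike K] [ExpVectorSpace K X] (A : Set X) : Prop :=
  ∀ α : K, ‖α‖ ≤ 1 → ∀ x ∈ A, α • x ∈ A

def upSet {X : Type*} [Preorder X] (A : Set X) : Set X := {x | ∃ a ∈ A, a ≤ x}

def downSet {X : Type*} [Preorder X] (A : Set X) : Set X := {x | ∃ a ∈ A, x ≤ a}

class TopExpVectorSpace (K : Type*) (X : Type*) [RCLike K] [TopologicalSpace X] extends
    ExpVectorSpace K X where
  continuous_add' : Continuous fun p : X × X => p.1 + p.2
  continuous_smul' : Continuous fun p : K × X => p.1 • p.2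
  isClosed_le' : IsClosed {p : X × X | p.1 ≤ p.2}

def EvsBounded (K : Type*) {X : Type*} [RCLike K] [TopologicalSpace X]
    [TopExpVectorSpace K X] (A : Set X) : Prop :=
  ∀ V ∈ nhds (0 : X), ∃ α : ℝ, 0 < α ∧ ∀ μ : K, ‖μ‖ ≤ α → (μ • A : Set X) ⊆ V

/-- in a topological evs, every neighbourhood of θ is absorbing. -/
theorem stmt7 {K X : Type*} [RCLike K] [TopologicalSpace X] [TopExpVectorSpace K X]
    {U : Set X} (hU : U ∈ nhds (0 : X)) : EvsAbsorbing K U := by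
  intro x
  have hf : Continuous fun μ : K => μ • x :=
    TopExpVectorSpace.continuous_smul'.comp (continuous_id.prodMk continuous_const)
  have h0 : (0 : K) • x = 0 := (ExpVectorSpace.smul_eq_zero_iff' (0 : K) x).2 (Or.inl rfl)
  have hpre : (fun μ : K => μ • x) ⁻¹' U ∈ nhds (0 : K) := by
    apply hf.continuousAt (x := (0 : K))
    simpa only [h0] using hU
  rcases Metric.mem_nhds_iff.1 hpre with ⟨ε, hε, hball⟩
  refine ⟨ε / 2, by positivity, fun μ hμ => ?_⟩
  have : μ ∈ Metric.ball (0 : K) ε := by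
    simp only [Metric.mem_ball, dist_zero_right]
    linarith
  exact hball this
end

section
/- In a topological exponential vector space X over K, every neighbourhood U of θ contains a balanced neighbourhood V of θ. -/
open Pointwise

/-- every neighbourhood of θ contains a balanced neighbourhood of θ. -/
theorem stmt8 {K X : Type*} [RCLike K] [TopologicalSpace X] [TopExpVectorSpace K X]
    {U : Set X} (hU : U ∈ nhds (0 : X)) :
    ∃ V ∈ nhds (0 : X), EvsBalanced K V ∧ V ⊆ U := by
  -- continuity of smul at (0,0)
  have hsmul : Continuous fun p : K × X => p.1 • p.2 := TopExpVectorSpace.continuous_smul'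
  have hzero : (0 : K) • (0 : X) = 0 := by
    rw [ExpVectorSpace.smul_eq_zero_iff']; left; rfl
  have hpre : (fun p : K × X => p.1 • p.2) ⁻¹' U ∈ nhds ((0 : K), (0 : X)) := by
    apply hsmul.continuousAt.preimage_mem_nhds
    rwa [hzero]
  rw [mem_nhds_prod_iff] at hpre
  obtain ⟨s, hs, t, ht, hst⟩ := hpre
  obtain ⟨ε, hε, hball⟩ := Metric.mem_nhds_iff.mp hs
  -- the balanced set
  refine ⟨{x : X | ∃ α : K, ‖α‖ < ε ∧ ∃ w ∈ t, x = α • w}, ?_, ?_, ?_⟩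
  · -- neighbourhood of 0
    set c : K := (RCLike.ofReal (ε / 2) : K) with hc
    have hcnorm : ‖c‖ < ε := by
      rw [hc, RCLike.norm_ofReal, abs_of_pos (by linarith)]; linarith
    have hcne : c ≠ 0 := by
      rw [hc]; simp only [ne_eq, map_eq_zero]; positivity
    have hg : Continuous fun x : X => c⁻¹ • x :=
      hsmul.comp (continuous_const.prodMk continuous_id)
    have h0 : (c⁻¹ : K) • (0 : X) = 0 := by
      rw [ExpVectorSpace.smul_eq_zero_iff']; right; rfl
    have hmem : (fun x : X => c⁻¹ • x) ⁻¹' t ∈ nhds (0 : X) := by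
      apply hg.continuousAt.preimage_mem_nhds
      rwa [h0]
    refine Filter.mem_of_superset hmem ?_
    intro x hx
    refine ⟨c, hcnorm, c⁻¹ • x, hx, ?_⟩
    rw [ExpVectorSpace.mul_smul', mul_inv_cancel₀ hcne, ExpVectorSpace.one_smul']
  · -- balanced
    rintro β hβ x ⟨α, hα, w, hw, rfl⟩
    refine ⟨β * α, ?_, w, hw, ?_⟩
    · calc ‖β * α‖ = ‖β‖ * ‖α‖ := norm_mul _ _
        _ ≤ 1 * ‖α‖ := by
            apply mul_le_mul_of_nonneg_right hβ (norm_nonneg _)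
        _ < ε := by rwa [one_mul]
    · rw [ExpVectorSpace.mul_smul']
  · -- contained in U
    rintro x ⟨α, hα, w, hw, rfl⟩
    have hαs : α ∈ s := hball (by simpa [Metric.mem_ball] using hα)
    exact hst (show (α, w) ∈ s ×ˢ t from ⟨hαs, hw⟩)
end

section
/- In a topological exponential vector space X over K, if x ≰ y then there exist balanced neighbourhoods U, V of θ such that ↑(x + U) ∩ ↓(y + V) = ∅. -/
open Pointwise

section Aux
variable {K X : Type*} [RCLike K] [TopologicalSpace X] [TopExpVectorSpace K X]

lemma evs_smul_zero (c : K) : c • (0 : X) = 0 :=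
  (ExpVectorSpace.smul_eq_zero_iff' c (0 : X)).mpr (Or.inr rfl)

lemma evs_balanced_core (W : Set X) (hW : W ∈ nhds (0 : X)) :
    ∃ U ∈ nhds (0 : X), EvsBalanced K U ∧ U ⊆ W := by
  have hc : Continuous fun p : K × X => p.1 • p.2 :=
    TopExpVectorSpace.continuous_smul'
  have h0 : ((fun p : K × X => p.1 • p.2) ⁻¹' W) ∈ nhds ((0 : K), (0 : X)) := by
    apply hc.continuousAt.preimage_mem_nhds
    simpa [evs_smul_zero (K := K) (X := X) (0 : K)] using hW
  rcases mem_nhds_prod_iff.mp h0 with ⟨s, hs, t, ht, hst⟩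
  rcases Metric.mem_nhds_iff.mp hs with ⟨δ, hδ, hball⟩
  refine ⟨{m : X | ∃ α : K, ‖α‖ < δ ∧ ∃ n ∈ t, m = α • n}, ?_, ?_, ?_⟩
  · -- nhds
    set c : K := ((δ / 2 : ℝ) : K) with hcdef
    have hcnorm : ‖c‖ = δ / 2 := by
      rw [hcdef, RCLike.norm_ofReal, abs_of_pos (by linarith)]
    have hcne : c ≠ 0 := by
      intro hc0
      rw [hc0, norm_zero] at hcnorm; linarith
    have hcont : Continuous fun m : X => c⁻¹ • m :=
      hc.comp (continuous_const.prodMk continuous_id)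
    have hpre : (fun m : X => c⁻¹ • m) ⁻¹' t ∈ nhds (0 : X) := by
      apply hcont.continuousAt.preimage_mem_nhds
      simpa [evs_smul_zero (K := K) (X := X) (c⁻¹)] using ht
    refine Filter.mem_of_superset hpre ?_
    intro m hm
    refine ⟨c, by rw [hcnorm]; linarith, c⁻¹ • m, hm, ?_⟩
    rw [ExpVectorSpace.mul_smul', mul_inv_cancel₀ hcne, ExpVectorSpace.one_smul']
  · -- balanced
    rintro β hβ m ⟨α, hα, n, hn, rfl⟩
    refine ⟨β * α, ?_, n, hn, ExpVectorSpace.mul_smul' β α n⟩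
    calc ‖β * α‖ = ‖β‖ * ‖α‖ := norm_mul _ _
      _ ≤ 1 * ‖α‖ := by
          exact mul_le_mul_of_nonneg_right hβ (norm_nonneg _)
      _ = ‖α‖ := one_mul _
      _ < δ := hα
  · -- subset of W
    rintro m ⟨α, hα, n, hn, rfl⟩
    exact hst (Set.mk_mem_prod (hball (by simpa using hα)) hn)

end Aux

/-- if x ≰ y then there exist balanced neighbourhoods U, V of θ with
↑(x + U) ∩ ↓(y + V) = ∅. -/
theorem stmt11 {K X : Type*} [RCLike K] [TopologicalSpace X] [TopExpVectorSpace K X]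
    {x y : X} (h : ¬ x ≤ y) :
    ∃ U ∈ nhds (0 : X), ∃ V ∈ nhds (0 : X), EvsBalanced K U ∧ EvsBalanced K V ∧
      upSet ((fun u => x + u) '' U) ∩ downSet ((fun v => y + v) '' V) = ∅ := by
  classical
  have hopen : IsOpen {p : X × X | p.1 ≤ p.2}ᶜ :=
    (TopExpVectorSpace.isClosed_le' (K := K) (X := X)).isOpen_compl
  have hadd : Continuous fun p : X × X => p.1 + p.2 :=
    TopExpVectorSpace.continuous_add' (K := K)
  have hf : Continuous fun p : X × X => ((x + p.1, y + p.2) : X × X) := by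
    refine Continuous.prodMk ?_ ?_
    · exact hadd.comp (continuous_const.prodMk continuous_fst)
    · exact hadd.comp (continuous_const.prodMk continuous_snd)
  have hmem : ((fun p : X × X => ((x + p.1, y + p.2) : X × X)) ⁻¹'
      {p : X × X | p.1 ≤ p.2}ᶜ) ∈ nhds ((0 : X), (0 : X)) := by
    apply hf.continuousAt.preimage_mem_nhds
    apply hopen.mem_nhds
    simpa using h
  rcases mem_nhds_prod_iff.mp hmem with ⟨W₁, hW₁, W₂, hW₂, hW⟩
  rcases evs_balanced_core (K := K) W₁ hW₁ with ⟨U, hU, hUbal, hUsub⟩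
  rcases evs_balanced_core (K := K) W₂ hW₂ with ⟨V, hV, hVbal, hVsub⟩
  refine ⟨U, hU, V, hV, hUbal, hVbal, ?_⟩
  rw [Set.eq_empty_iff_forall_notMem]
  rintro z ⟨⟨a, ⟨u, hu, rfl⟩, hle1⟩, ⟨b, ⟨v, hv, rfl⟩, hle2⟩⟩
  have : ¬ (x + u ≤ y + v) := hW (Set.mk_mem_prod (hUsub hu) (hVsub hv))
  exact this (le_trans hle1 hle2)
end

section
/- A subset A of a topological exponential vector space X over K is bounded if and only if for every sequence (x_n) in A and every sequence (λ_n) in K with λ_n → 0, we have λ_n x_n → θ. (For the 'if' direction assume X is first countable, or use the sequential argument as in the paper.) -/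
open Pointwise

/-- (X first countable) A is bounded iff for every sequence (xₙ) in A and
every null sequence (λₙ) of scalars, λₙ • xₙ → θ. -/
theorem stmt13 {K X : Type*} [RCLike K] [TopologicalSpace X] [TopExpVectorSpace K X]
    [FirstCountableTopology X] (A : Set X) :
    EvsBounded K A ↔
      ∀ x : ℕ → X, (∀ n, x n ∈ A) → ∀ l : ℕ → K,
        Filter.Tendsto l Filter.atTop (nhds (0 : K)) →
        Filter.Tendsto (fun n => l n • x n) Filter.atTop (nhds (0 : X)) := by
  constructor
  · intro hA x hx l hl
    rw [Filter.tendsto_def]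
    intro V hV
    obtain ⟨α, hα, hsub⟩ := hA V hV
    have hev : ∀ᶠ n in Filter.atTop, ‖l n‖ < α := by
      have h0 : Filter.Tendsto (fun n => ‖l n‖) Filter.atTop (nhds 0) := by
        simpa using hl.norm
      exact h0.eventually_lt_const hα
    filter_upwards [hev] with n hn
    exact hsub (l n) hn.le (Set.smul_mem_smul_set (hx n))
  · intro h
    by_contra hA
    unfold EvsBounded at hA
    push_neg at hA
    obtain ⟨V, hV, hbad⟩ := hA
    have hchoice : ∀ n : ℕ, ∃ μ : K, ‖μ‖ ≤ 1/(n+1) ∧ ∃ a ∈ A, μ • a ∉ V := by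
      intro n
      obtain ⟨μ, hμ, hns⟩ := hbad (1/(n+1)) (by positivity)
      rw [Set.not_subset] at hns
      obtain ⟨y, hy, hyV⟩ := hns
      obtain ⟨a, ha, rfl⟩ := hy
      exact ⟨μ, hμ, a, ha, hyV⟩
    choose μ hμ a ha haV using hchoice
    have hl : Filter.Tendsto μ Filter.atTop (nhds (0 : K)) := by
      rw [tendsto_zero_iff_norm_tendsto_zero]
      refine squeeze_zero (fun n => norm_nonneg _) hμ ?_
      exact tendsto_one_div_add_atTop_nhds_zero_nat
    have := (h a ha μ hl).eventually_mem hV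
    obtain ⟨n, hn⟩ := this.exists
    exact haV n hn
end

section
/- Every compact subset of a topological exponential vector space X over K is bounded. -/
open Pointwise

/-- every compact subset of a topological evs is bounded. -/
theorem stmt15 {K X : Type*} [RCLike K] [TopologicalSpace X] [TopExpVectorSpace K X]
    {A : Set X} (hA : IsCompact A) : EvsBounded K A := by
  intro V hV
  have key : ∀ x : X, ∃ δ : ℝ, 0 < δ ∧ ∃ t ∈ nhds x,
      ∀ μ : K, ‖μ‖ ≤ δ → ∀ y ∈ t, μ • y ∈ V := by
    intro x
    have h0 : (0 : K) • x = 0 := (ExpVectorSpace.smul_eq_zero_iff' (0 : K) x).mpr (Or.inl rfl)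
    have hc : ContinuousAt (fun p : K × X => p.1 • p.2) ((0 : K), x) :=
      (TopExpVectorSpace.continuous_smul' (K := K) (X := X)).continuousAt
    have hmem : V ∈ nhds ((fun p : K × X => p.1 • p.2) ((0 : K), x)) := by
      simpa [h0] using hV
    have hpre := hc hmem
    rw [nhds_prod_eq] at hpre
    obtain ⟨s, hs, t, ht, hst⟩ := Filter.mem_prod_iff.mp hpre
    obtain ⟨δ, hδ, hball⟩ := Metric.mem_nhds_iff.mp hs
    refine ⟨δ / 2, by linarith, t, ht, ?_⟩
    intro μ hμ y hy
    have h1 : μ ∈ s := hball (by simpa [Metric.mem_ball, dist_eq_norm] using hμ.trans_lt (by linarith))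
    exact hst (Set.mk_mem_prod h1 hy)
  choose δ hδ t ht hprop using key
  obtain ⟨s, hsA, hcov⟩ := hA.elim_nhds_subcover t (fun x _ => ht x)
  rcases s.eq_empty_or_nonempty with rfl | hne
  · refine ⟨1, one_pos, fun μ _ z hz => ?_⟩
    obtain ⟨a, ha, rfl⟩ := hz
    exact absurd (hcov ha) (by simp)
  · refine ⟨s.inf' hne δ, ?_, ?_⟩
    · exact (Finset.lt_inf'_iff hne).mpr (fun y _ => hδ y)
    · intro μ hμ z hz
      obtain ⟨a, ha, rfl⟩ := hz
      obtain ⟨x, hx, hax⟩ := Set.mem_iUnion₂.mp (hcov ha)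
      exact hprop x μ (hμ.trans (Finset.inf'_le δ hx)) a hax
end

section
/- The property of being a radial evs is productive: if {X_i : i ∈ Λ} is a family of radial exponential vector spaces over K, then the product evs ∏_i X_i (with coordinatewise operations and order) is radial. -/
open Pointwise

/-- An evs is radial if any two distinct points can be separated by an absorbing set
(containing exactly one of them). -/
def EvsRadial (K : Type*) (X : Type*) [RCLike K] [ExpVectorSpace K X] : Prop :=
  ∀ x y : X, x ≠ y → ∃ A : Set X,
    EvsAbsorbing K A ∧ ((x ∈ A ∧ y ∉ A) ∨ (y ∈ A ∧ x ∉ A))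

/-- In a product of partial orders, an element is minimal iff it is coordinatewise minimal. -/
lemma pi_isMin_iff {ι : Type*} {X : ι → Type*} [∀ i, PartialOrder (X i)]
    (x : ∀ i, X i) : IsMin x ↔ ∀ i, IsMin (x i) := by
  classical
  constructor
  · intro hx i y hy
    have h1 : Function.update x i y ≤ x := by
      intro j
      by_cases hj : j = i
      · subst hj; simpa using hy
      · simp [Function.update_of_ne hj]
    have h2 := hx h1
    simpa using h2 i
  · intro h y hy
    intro i
    exact h i (hy i)

/-- The product of a family of exponential vector spaces is an exponential vector space
with coordinatewise operations and order. -/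
instance Pi.instExpVectorSpace {K ι : Type*} [RCLike K] {X : ι → Type*}
    [∀ i, ExpVectorSpace K (X i)] : ExpVectorSpace K (∀ i, X i) where
  toAddCommMonoid := Pi.addCommMonoid
  toPartialOrder := Pi.partialOrder
  toSMul := Pi.instSMul
  add_le_add_right' h z i := ExpVectorSpace.add_le_add_right' (h i) (z i)
  smul_le_smul' h α i := ExpVectorSpace.smul_le_smul' (h i) α
  smul_add' α x y := funext fun i => ExpVectorSpace.smul_add' α (x i) (y i)
  mul_smul' α β x := funext fun i => ExpVectorSpace.mul_smul' α β (x i)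
  add_smul_le' α β x i := ExpVectorSpace.add_smul_le' α β (x i)
  one_smul' x := funext fun i => ExpVectorSpace.one_smul' (x i)
  smul_eq_zero_iff' α x := by
    constructor
    · intro h
      by_cases hα : α = 0
      · exact Or.inl hα
      · refine Or.inr (funext fun i => ?_)
        have hi : α • x i = 0 := congrFun h i
        rcases (ExpVectorSpace.smul_eq_zero_iff' α (x i)).mp hi with h' | h'
        · exact absurd h' hα
        · exact h'
    · rintro (h | h)
      · exact funext fun i => (ExpVectorSpace.smul_eq_zero_iff' α (x i)).mpr (Or.inl h)
      · exact funext fun i =>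
          (ExpVectorSpace.smul_eq_zero_iff' α (x i)).mpr (Or.inr (congrFun h i))
  add_neg_one_smul_eq_zero_iff' x := by
    rw [pi_isMin_iff]
    constructor
    · intro h i
      exact (ExpVectorSpace.add_neg_one_smul_eq_zero_iff' (x i)).mp (congrFun h i)
    · intro h
      exact funext fun i =>
        (ExpVectorSpace.add_neg_one_smul_eq_zero_iff' (x i)).mpr (h i)
  exists_isMin_le' x := by
    choose p hp hle using fun i => ExpVectorSpace.exists_isMin_le' (K := K) (x i)
    exact ⟨p, (pi_isMin_iff p).mpr hp, hle⟩

/-- the property of being radial is productive: a product of radial evs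
is radial. -/
theorem stmt19 {K ι : Type*} [RCLike K] {X : ι → Type*} [∀ i, ExpVectorSpace K (X i)]
    (h : ∀ i, EvsRadial K (X i)) : EvsRadial K (∀ i, X i) := by
  intro x y hxy
  have : ∃ i, x i ≠ y i := by
    by_contra hc
    push_neg at hc
    exact hxy (funext hc)
  obtain ⟨i, hi⟩ := this
  obtain ⟨A, hA, hsep⟩ := h i (x i) (y i) hi
  refine ⟨{z | z i ∈ A}, ?_, ?_⟩
  · intro z
    obtain ⟨α, hα, hμ⟩ := hA (z i)
    exact ⟨α, hα, fun μ hμ' => hμ μ hμ'⟩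
  · rcases hsep with ⟨h1, h2⟩ | ⟨h1, h2⟩
    · exact Or.inl ⟨h1, h2⟩
    · exact Or.inr ⟨h1, h2⟩
end
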